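/- In a minimum-size unsatisfiable (3,4)-formula F, for every variable x of degree 3, the three clauses containing x share a common literal a distinct from x and ¬x: they have the form {x,a,b}, {¬x,a,c}, {¬x,a,d} (up to renaming the polarity of x). -/
import Mathlib


abbrev Lit := ℕ × Bool

def Lit.neg (l : Lit) : Lit := (l.1, !l.2)

abbrev Clause := Finset Lit

def Clause.nontaut (C : Clause) : Prop := ∀ l ∈ C, Lit.neg l ∉ C

instance (C : Clause) : Decidable (Clause.nontaut C) := by
  unfold Clause.nontaut; infer_instance

abbrev CNF := Finset Clause

def satClause (τ : ℕ → Bool) (C : Clause) : Prop := ∃ l ∈ C, τ l.1 = l.2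

def satCNF (τ : ℕ → Bool) (F : CNF) : Prop := ∀ C ∈ F, satClause τ C

def Satisfiable (F : CNF) : Prop := ∃ τ, satCNF τ F

def occ (F : CNF) (v : ℕ) : CNF := F.filter (fun C => (v, true) ∈ C ∨ (v, false) ∈ C)

def vdeg (F : CNF) (v : ℕ) : ℕ := (occ F v).card

def ldeg (F : CNF) (l : Lit) : ℕ := (F.filter (fun C => l ∈ C)).card

def vars (F : CNF) : Finset ℕ := F.sup (fun C => C.image Prod.fst)

def isKCNF (k : ℕ) (F : CNF) : Prop := ∀ C ∈ F, Clause.nontaut C ∧ C.card = k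

def KS (k s : ℕ) (F : CNF) : Prop := isKCNF k F ∧ ∀ v, vdeg F v ≤ s

def KPQ (k p q : ℕ) (F : CNF) : Prop :=
  isKCNF k F ∧ ∀ v, ldeg F (v, true) ≤ p ∧ ldeg F (v, false) ≤ q

def MinUnsat (F : CNF) : Prop := ¬ Satisfiable F ∧ ∀ C ∈ F, Satisfiable (F.erase C)

/-! helpers -/

def hasVar (v : ℕ) (C : Clause) : Prop := (v, true) ∈ C ∨ (v, false) ∈ C

instance (v : ℕ) (C : Clause) : Decidable (hasVar v C) := by unfold hasVar; infer_instance

lemma mem_occ {F : CNF} {v : ℕ} {C : Clause} : C ∈ occ F v ↔ C ∈ F ∧ hasVar v C := by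
  simp [occ, hasVar, Finset.mem_filter]

lemma hasVar_of_mem {v : ℕ} {C : Clause} {l : Lit} (hl : l ∈ C) (hv : l.1 = v) : hasVar v C := by
  rcases l with ⟨w, b⟩; cases b <;> subst hv <;> [exact Or.inr hl; exact Or.inl hl]

lemma mem_of_hasVar {v : ℕ} {C : Clause} (h : hasVar v C) : ∃ l ∈ C, l.1 = v := by
  rcases h with h | h
  · exact ⟨(v, true), h, rfl⟩
  · exact ⟨(v, false), h, rfl⟩

lemma mem_vars_of_mem {H : CNF} {C : Clause} {l : Lit} (hC : C ∈ H) (hl : l ∈ C) :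
    l.1 ∈ vars H := by
  apply Finset.mem_sup.2 ⟨C, hC, ?_⟩
  exact Finset.mem_image_of_mem Prod.fst hl

lemma satClause_mono {τ : ℕ → Bool} {C D : Clause} (h : C ⊆ D) (hs : satClause τ C) :
    satClause τ D := by
  rcases hs with ⟨l, hl, he⟩; exact ⟨l, h hl, he⟩

lemma satClause_of_taut {τ : ℕ → Bool} {C : Clause} (h : ¬ Clause.nontaut C) :
    satClause τ C := by
  simp only [Clause.nontaut, not_forall] at h
  rcases h with ⟨l, hl, hnl⟩
  rw [not_not] at hnl
  by_cases he : τ l.1 = l.2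
  · exact ⟨l, hl, he⟩
  · refine ⟨Lit.neg l, hnl, ?_⟩
    show τ l.1 = !l.2
    cases hb : τ l.1 <;> cases hb2 : l.2 <;> simp_all

lemma satClause_update {τ : ℕ → Bool} {C : Clause} {x : ℕ} {b : Bool}
    (h : ∀ l ∈ C, l.1 ≠ x) : satClause (Function.update τ x b) C ↔ satClause τ C := by
  constructor <;> rintro ⟨l, hl, he⟩ <;> refine ⟨l, hl, ?_⟩
  · rwa [Function.update_of_ne (h l hl) b τ] at he
  · rwa [Function.update_of_ne (h l hl) b τ]

lemma vdeg_union_le (A B : CNF) (v : ℕ) : vdeg (A ∪ B) v ≤ vdeg A v + vdeg B v := by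
  unfold vdeg occ
  rw [Finset.filter_union]
  exact Finset.card_union_le _ _

lemma vdeg_mono {A B : CNF} (h : A ⊆ B) (v : ℕ) : vdeg A v ≤ vdeg B v := by
  unfold vdeg occ
  exact Finset.card_le_card (Finset.filter_subset_filter _ h)

lemma vdeg_sdiff_add (F T : CNF) (hT : T ⊆ F) (v : ℕ) :
    vdeg (F \ T) v + vdeg T v = vdeg F v := by
  unfold vdeg occ
  rw [← Finset.card_union_of_disjoint, ← Finset.filter_union, Finset.sdiff_union_of_subset hT]
  exact Finset.disjoint_filter_filter (Finset.sdiff_disjoint)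

lemma vdeg_single (E : Clause) (v : ℕ) :
    vdeg ({E} : CNF) v = (if hasVar v E then 1 else 0) := by
  unfold vdeg occ
  rw [Finset.filter_singleton]
  by_cases h : hasVar v E <;> simp [hasVar] at h <;> simp [h, hasVar]

lemma vdeg_pair_le (E2 E3 : Clause) (v : ℕ) :
    vdeg ({E2, E3} : CNF) v ≤ (if hasVar v E2 then 1 else 0) + (if hasVar v E3 then 1 else 0) := by
  have : ({E2, E3} : CNF) = {E2} ∪ {E3} := rfl
  rw [this, ← vdeg_single E2 v, ← vdeg_single E3 v]
  exact vdeg_union_le _ _ _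

lemma vdeg_triple (C1 C2 C3 : Clause) (h12 : C1 ≠ C2) (h13 : C1 ≠ C3) (h23 : C2 ≠ C3) (v : ℕ) :
    vdeg ({C1, C2, C3} : CNF) v = (if hasVar v C1 then 1 else 0) +
      (if hasVar v C2 then 1 else 0) + (if hasVar v C3 then 1 else 0) := by
  unfold vdeg occ
  simp only [Finset.filter_insert, Finset.filter_singleton, hasVar]
  by_cases h1 : (v, true) ∈ C1 ∨ (v, false) ∈ C1 <;>
  by_cases h2 : (v, true) ∈ C2 ∨ (v, false) ∈ C2 <;>
  by_cases h3 : (v, true) ∈ C3 ∨ (v, false) ∈ C3 <;>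
  simp [h1, h2, h3, hasVar, Finset.card_insert_of_notMem, h12, h13, h23,
    Finset.mem_insert, Finset.mem_singleton]

lemma vdeg_eq_zero_of_notMem_vars {H : CNF} {v : ℕ} (h : v ∉ vars H) : vdeg H v = 0 := by
  unfold vdeg
  rw [Finset.card_eq_zero]
  rw [Finset.eq_empty_iff_forall_notMem]
  intro C hC
  rcases mem_occ.1 hC with ⟨hCF, hv⟩
  rcases mem_of_hasVar hv with ⟨l, hl, hlv⟩
  exact h (hlv ▸ mem_vars_of_mem hCF hl)

lemma fst_ne_of_erase {C : Clause} {x : ℕ} {ε : Bool} (hnt : Clause.nontaut C)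
    (hx : (x, ε) ∈ C) : ∀ l ∈ C.erase (x, ε), l.1 ≠ x := by
  rintro ⟨w, b⟩ hl hlx
  dsimp at hlx; subst hlx
  have hlC := Finset.mem_of_mem_erase hl
  have hne := Finset.ne_of_mem_erase hl
  have hb : b = !ε := by cases b <;> cases ε <;> simp_all
  subst hb
  exact hnt (w, ε) hx hlC

lemma fst_ne_of_not_hasVar {C : Clause} {x : ℕ} (h : ¬ hasVar x C) :
    ∀ l ∈ C, l.1 ≠ x := fun l hl hlx => h (hasVar_of_mem hl hlx)

lemma engine (F : CNF) (hF : KS 3 4 F) (hunsat : ¬ Satisfiable F)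
    (hmin : ∀ G : CNF, KS 3 4 G → ¬ Satisfiable G → F.card ≤ G.card)
    (x : ℕ) (ε : Bool) (C1 C2 C3 B1 B2 B3 : Clause)
    (hocc : occ F x = {C1, C2, C3})
    (h12 : C1 ≠ C2) (h13 : C1 ≠ C3) (h23 : C2 ≠ C3)
    (hx1 : (x, ε) ∈ C1) (hx2 : (x, !ε) ∈ C2) (hx3 : (x, !ε) ∈ C3)
    (hB1 : B1 = C1.erase (x, ε)) (hB2 : B2 = C2.erase (x, !ε)) (hB3 : B3 = C3.erase (x, !ε))
    (E2 E3 : Clause)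
    (hcard2 : E2.card = 3) (hcard3 : E3.card = 3)
    (hsem : ∀ τ, satClause τ E2 → satClause τ E3 →
      (satClause τ B1 ∨ satClause τ B2) ∧ (satClause τ B1 ∨ satClause τ B3))
    (hdeg2 : ∀ v, hasVar v E2 → (hasVar v C1 ∨ hasVar v C2) ∨ v ∉ vars F)
    (hdeg3 : ∀ v, hasVar v E3 → (hasVar v C1 ∨ hasVar v C3) ∨ v ∉ vars F)
    (hdegb : ∀ v, hasVar v E2 → hasVar v E3 →
      ((hasVar v C1 ∧ hasVar v C2) ∨ (hasVar v C1 ∧ hasVar v C3) ∨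
        (hasVar v C2 ∧ hasVar v C3)) ∨ v ∉ vars F) : False := by
  have hoccF : occ F x ⊆ F := Finset.filter_subset _ _
  have hC1F : C1 ∈ F := hoccF (by rw [hocc]; simp)
  have hC2F : C2 ∈ F := hoccF (by rw [hocc]; simp)
  have hC3F : C3 ∈ F := hoccF (by rw [hocc]; simp)
  have hnt1 : Clause.nontaut C1 := (hF.1 C1 hC1F).1
  have hnt2 : Clause.nontaut C2 := (hF.1 C2 hC2F).1
  have hnt3 : Clause.nontaut C3 := (hF.1 C3 hC3F).1
  have hxB1 : ∀ l ∈ B1, l.1 ≠ x := hB1 ▸ fst_ne_of_erase hnt1 hx1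
  have hxB2 : ∀ l ∈ B2, l.1 ≠ x := hB2 ▸ fst_ne_of_erase hnt2 hx2
  have hxB3 : ∀ l ∈ B3, l.1 ≠ x := hB3 ▸ fst_ne_of_erase hnt3 hx3
  set rest : CNF := F \ occ F x with hrest
  set N : CNF := ({E2, E3} : CNF).filter Clause.nontaut with hN
  set G : CNF := rest ∪ N with hG
  -- G is unsatisfiable
  have hGunsat : ¬ Satisfiable G := by
    rintro ⟨τ, hτ⟩
    have satE2 : satClause τ E2 := by
      by_cases h : Clause.nontaut E2
      · exact hτ E2 (Finset.mem_union_right _ (Finset.mem_filter.2 ⟨by simp, h⟩))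
      · exact satClause_of_taut h
    have satE3 : satClause τ E3 := by
      by_cases h : Clause.nontaut E3
      · exact hτ E3 (Finset.mem_union_right _ (Finset.mem_filter.2 ⟨by simp, h⟩))
      · exact satClause_of_taut h
    obtain ⟨hs2, hs3⟩ := hsem τ satE2 satE3
    have hrestsat : ∀ C ∈ F, ¬ hasVar x C → ∀ b, satClause (Function.update τ x b) C := by
      intro C hCF hCx b
      rw [satClause_update (fst_ne_of_not_hasVar hCx)]
      exact hτ C (Finset.mem_union_left _ (Finset.mem_sdiff.2 ⟨hCF, fun hmem => hCx (mem_occ.1 hmem).2⟩))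
    apply hunsat
    by_cases hb1 : satClause τ B1
    · refine ⟨Function.update τ x (!ε), fun C hC => ?_⟩
      by_cases hCx : hasVar x C
      · have hCocc : C ∈ occ F x := mem_occ.2 ⟨hC, hCx⟩
        rw [hocc] at hCocc
        simp only [Finset.mem_insert, Finset.mem_singleton] at hCocc
        rcases hCocc with rfl | rfl | rfl
        · refine satClause_mono (hB1 ▸ Finset.erase_subset _ _) ?_
          rwa [satClause_update hxB1]
        · exact ⟨(x, !ε), hx2, by simp⟩
        · exact ⟨(x, !ε), hx3, by simp⟩
      · exact hrestsat C hC hCx _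
    · have hb2 : satClause τ B2 := hs2.resolve_left hb1
      have hb3 : satClause τ B3 := hs3.resolve_left hb1
      refine ⟨Function.update τ x ε, fun C hC => ?_⟩
      by_cases hCx : hasVar x C
      · have hCocc : C ∈ occ F x := mem_occ.2 ⟨hC, hCx⟩
        rw [hocc] at hCocc
        simp only [Finset.mem_insert, Finset.mem_singleton] at hCocc
        rcases hCocc with rfl | rfl | rfl
        · exact ⟨(x, ε), hx1, by simp⟩
        · refine satClause_mono (hB2 ▸ Finset.erase_subset _ _) ?_
          rwa [satClause_update hxB2]
        · refine satClause_mono (hB3 ▸ Finset.erase_subset _ _) ?_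
          rwa [satClause_update hxB3]
      · exact hrestsat C hC hCx _
  -- G is a (3,4)-formula
  have hGKS : KS 3 4 G := by
    constructor
    · intro C hC
      rcases Finset.mem_union.1 hC with h | h
      · exact hF.1 C (Finset.mem_sdiff.1 h).1
      · have h' := Finset.mem_filter.1 h
        refine ⟨h'.2, ?_⟩
        rcases Finset.mem_insert.1 h'.1 with rfl | h''
        · exact hcard2
        · rw [Finset.mem_singleton.1 h'']; exact hcard3
    · intro v
      clear_value rest N G
      have hsplit : vdeg rest v + vdeg (occ F x) v = vdeg F v := by
        rw [hrest]; exact vdeg_sdiff_add F (occ F x) hoccF v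
      have h1 : vdeg G v ≤ vdeg rest v + vdeg N v := by
        rw [hG]; exact vdeg_union_le _ _ _
      have h2 : vdeg N v ≤ vdeg ({E2, E3} : CNF) v := by
        rw [hN]; exact vdeg_mono (Finset.filter_subset _ _) v
      have h3 := vdeg_pair_le E2 E3 v
      by_cases hv : v ∈ vars F
      · have htrip : vdeg (occ F x) v = (if hasVar v C1 then 1 else 0) +
            (if hasVar v C2 then 1 else 0) + (if hasVar v C3 then 1 else 0) := by
          rw [hocc]; exact vdeg_triple C1 C2 C3 h12 h13 h23 v
        have hdF : vdeg F v ≤ 4 := hF.2 v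
        have key : (if hasVar v E2 then 1 else 0) + (if hasVar v E3 then 1 else 0) ≤
            (if hasVar v C1 then 1 else 0) + (if hasVar v C2 then 1 else 0) +
            (if hasVar v C3 then 1 else 0) := by
          by_cases hE2 : hasVar v E2 <;> by_cases hE3 : hasVar v E3
          · rcases hdegb v hE2 hE3 with (⟨ha, hb⟩ | ⟨ha, hb⟩ | ⟨ha, hb⟩) | h
            · simp only [hE2, hE3, ha, hb, if_true]
              all_goals first | omega | (split <;> omega)
            · simp only [hE2, hE3, ha, hb, if_true]
              all_goals first | omega | (split <;> omega)
            · simp only [hE2, hE3, ha, hb, if_true]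
              all_goals first | omega | (split <;> omega)
            · exact absurd hv h
          · rcases hdeg2 v hE2 with (ha | ha) | h
            · simp only [hE2, hE3, ha, if_true, if_false]
              all_goals first | omega | (split <;> omega) | (split <;> split <;> omega)
            · simp only [hE2, hE3, ha, if_true, if_false]
              all_goals first | omega | (split <;> omega) | (split <;> split <;> omega)
            · exact absurd hv h
          · rcases hdeg3 v hE3 with (ha | ha) | h
            · simp only [hE2, hE3, ha, if_true, if_false]
              all_goals first | omega | (split <;> omega) | (split <;> split <;> omega)
            · simp only [hE2, hE3, ha, if_true, if_false]
              all_goals first | omega | (split <;> omega) | (split <;> split <;> omega)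
            · exact absurd hv h
          · simp only [hE2, hE3, if_false]
            all_goals first | omega | (split <;> omega) | (split <;> split <;> omega) | (split <;> split <;> split <;> omega)
        omega
      · have hvrest : v ∉ vars rest := fun h => hv (by
          rcases Finset.mem_sup.1 h with ⟨C, hC, hvC⟩
          rw [hrest] at hC
          exact Finset.mem_sup.2 ⟨C, (Finset.mem_sdiff.1 hC).1, hvC⟩)
        have hz := vdeg_eq_zero_of_notMem_vars hvrest
        have hpair2 : vdeg ({E2, E3} : CNF) v ≤ 2 := by
          unfold vdeg
          refine le_trans (Finset.card_le_card (Finset.filter_subset _ _)) ?_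
          exact le_trans (Finset.card_insert_le _ _) (by simp)
        omega
  -- cardinality
  have hoccCard : (occ F x).card = 3 := by
    rw [hocc]
    rw [Finset.card_insert_of_notMem (by simp [h12, h13]),
      Finset.card_insert_of_notMem (by simp [h23])]
    simp
  have hrestCard : rest.card = F.card - 3 := by
    rw [hrest, Finset.card_sdiff_of_subset hoccF, hoccCard]
  have hFcard : 3 ≤ F.card := by
    calc 3 = (occ F x).card := hoccCard.symm
    _ ≤ F.card := Finset.card_le_card hoccF
  have hNcard : N.card ≤ 2 := by
    calc N.card ≤ ({E2, E3} : CNF).card := Finset.card_le_card (Finset.filter_subset _ _)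
    _ ≤ 2 := Finset.card_insert_le _ _ |>.trans (by simp)
  have hGcard : G.card ≤ F.card - 1 := by
    calc G.card ≤ rest.card + N.card := Finset.card_union_le _ _
    _ ≤ (F.card - 3) + 2 := by omega
    _ ≤ F.card - 1 := by omega
  have := hmin G hGKS hGunsat
  clear_value rest N G
  omega

lemma drop_pure (F : CNF) (hF : KS 3 4 F) (hunsat : ¬ Satisfiable F)
    (hmin : ∀ G : CNF, KS 3 4 G → ¬ Satisfiable G → F.card ≤ G.card)
    (x : ℕ) (hx : vdeg F x = 3) (ε' : Bool)
    (hall : ∀ C ∈ occ F x, (x, ε') ∈ C) : False := by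
  have hoccF : occ F x ⊆ F := Finset.filter_subset _ _
  have hGunsat : ¬ Satisfiable (F \ occ F x) := by
    rintro ⟨τ, hτ⟩
    apply hunsat
    refine ⟨Function.update τ x ε', fun C hC => ?_⟩
    by_cases hCx : hasVar x C
    · exact ⟨(x, ε'), hall C (mem_occ.2 ⟨hC, hCx⟩), by simp⟩
    · rw [satClause_update (fst_ne_of_not_hasVar hCx)]
      exact hτ C (Finset.mem_sdiff.2 ⟨hC, fun h => hCx (mem_occ.1 h).2⟩)
  have hKS : KS 3 4 (F \ occ F x) :=
    ⟨fun C hC => hF.1 C (Finset.mem_sdiff.1 hC).1,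
     fun v => le_trans (vdeg_mono (Finset.sdiff_subset) v) (hF.2 v)⟩
  have hc3 : (occ F x).card = 3 := hx
  have hcard : (F \ occ F x).card = F.card - 3 := by rw [Finset.card_sdiff_of_subset hoccF, hc3]
  have h3 : 3 ≤ F.card := hc3 ▸ Finset.card_le_card hoccF
  have := hmin _ hKS hGunsat
  omega

lemma exists_pair {s : Finset Lit} (h : s.card = 2) {a : Lit} (ha : a ∈ s) :
    ∃ b, s = {a, b} := by
  obtain ⟨p, q, hpq, rfl⟩ := Finset.card_eq_two.1 h
  rcases Finset.mem_insert.1 ha with rfl | ha'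
  · exact ⟨q, rfl⟩
  · exact ⟨p, by rw [Finset.mem_singleton.1 ha', Finset.pair_comm]⟩

lemma inter_card_one {B B' : Clause} (hB : B.card = 2) (hne : B ∩ B' ≠ ∅)
    (hns : ¬ B ⊆ B') : (B ∩ B').card = 1 := by
  have h1 : 1 ≤ (B ∩ B').card := Finset.card_pos.2 (Finset.nonempty_iff_ne_empty.2 hne)
  have h2 : (B ∩ B').card ≤ 2 := hB ▸ Finset.card_le_card (Finset.inter_subset_left)
  rcases Nat.lt_or_ge (B ∩ B').card 2 with h | h
  · omega
  · exfalso
    have heq : B ∩ B' = B :=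
      Finset.eq_of_subset_of_card_le (Finset.inter_subset_left) (by omega)
    exact hns (fun l hl => (Finset.mem_inter.1 (heq.symm ▸ hl : l ∈ B ∩ B')).2)

lemma core (F : CNF) (hF : KS 3 4 F) (hunsat : ¬ Satisfiable F)
    (hmin : ∀ G : CNF, KS 3 4 G → ¬ Satisfiable G → F.card ≤ G.card)
    (x : ℕ) (C1 C2 C3 : Clause) (ε : Bool)
    (hocc : occ F x = {C1, C2, C3})
    (h12 : C1 ≠ C2) (h13 : C1 ≠ C3) (h23 : C2 ≠ C3)
    (hx1 : (x, ε) ∈ C1) (hx2 : (x, !ε) ∈ C2) (hx3 : (x, !ε) ∈ C3) :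
    ∃ (ε : Bool) (a b c d : Lit), a.1 ≠ x ∧
      occ F x = {({(x, ε), a, b} : Clause), {(x, !ε), a, c}, {(x, !ε), a, d}} := by
  have hoccF : occ F x ⊆ F := Finset.filter_subset _ _
  have hC1F : C1 ∈ F := hoccF (by rw [hocc]; simp)
  have hC2F : C2 ∈ F := hoccF (by rw [hocc]; simp)
  have hC3F : C3 ∈ F := hoccF (by rw [hocc]; simp)
  have hnt1 : Clause.nontaut C1 := (hF.1 C1 hC1F).1
  have hnt2 : Clause.nontaut C2 := (hF.1 C2 hC2F).1
  have hnt3 : Clause.nontaut C3 := (hF.1 C3 hC3F).1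
  have hc1 : C1.card = 3 := (hF.1 C1 hC1F).2
  have hc2 : C2.card = 3 := (hF.1 C2 hC2F).2
  have hc3 : C3.card = 3 := (hF.1 C3 hC3F).2
  set B1 : Clause := C1.erase (x, ε) with hB1
  set B2 : Clause := C2.erase (x, !ε) with hB2
  set B3 : Clause := C3.erase (x, !ε) with hB3
  have hB1card : B1.card = 2 := by rw [hB1, Finset.card_erase_of_mem hx1, hc1]
  have hB2card : B2.card = 2 := by rw [hB2, Finset.card_erase_of_mem hx2, hc2]
  have hB3card : B3.card = 2 := by rw [hB3, Finset.card_erase_of_mem hx3, hc3]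
  have hB1sub : B1 ⊆ C1 := hB1 ▸ Finset.erase_subset _ _
  have hB2sub : B2 ⊆ C2 := hB2 ▸ Finset.erase_subset _ _
  have hB3sub : B3 ⊆ C3 := hB3 ▸ Finset.erase_subset _ _
  have hxB1 : ∀ l ∈ B1, l.1 ≠ x := hB1 ▸ fst_ne_of_erase hnt1 hx1
  by_cases hcom : ∃ a, a ∈ B1 ∧ a ∈ B2 ∧ a ∈ B3
  · obtain ⟨a, ha1, ha2, ha3⟩ := hcom
    obtain ⟨b, hab1⟩ := exists_pair hB1card ha1
    obtain ⟨c, hab2⟩ := exists_pair hB2card ha2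
    obtain ⟨d, hab3⟩ := exists_pair hB3card ha3
    refine ⟨ε, a, b, c, d, hxB1 a ha1, ?_⟩
    have e1 : C1 = {(x, ε), a, b} := by
      rw [← Finset.insert_erase hx1, ← hB1, hab1]
    have e2 : C2 = {(x, !ε), a, c} := by
      rw [← Finset.insert_erase hx2, ← hB2, hab2]
    have e3 : C3 = {(x, !ε), a, d} := by
      rw [← Finset.insert_erase hx3, ← hB3, hab3]
    rw [hocc, e1, e2, e3]
  · exfalso
    have same_lit : ∀ l2 ∈ B1, ∀ l3 ∈ B1, l2.1 = l3.1 → l2 = l3 := by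
      rintro ⟨v, b2⟩ hm2 ⟨v3, b3⟩ hm3 h
      dsimp at h; subst h
      by_cases hb : b2 = b3
      · rw [hb]
      · exfalso
        have hb' : b3 = !b2 := by cases b2 <;> cases b3 <;> simp_all
        subst hb'
        exact hnt1 (v, b2) (hB1sub hm2) (hB1sub hm3)
    have keyB : ∀ E2 E3 : Clause, E2.card = 3 → E3.card = 3 → E2 ⊆ B1 ∪ B2 → E3 ⊆ B1 ∪ B3 →
        (∀ l, l ∈ E2 → l ∈ E3 → l ∈ B1 → l ∉ B2 → l ∉ B3 → False) → False := by
      intro E2 E3 hcE2 hcE3 hs2 hs3 huniq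
      refine engine F hF hunsat hmin x ε C1 C2 C3 B1 B2 B3 hocc h12 h13 h23 hx1 hx2 hx3
        hB1 hB2 hB3 E2 E3 hcE2 hcE3 ?_ ?_ ?_ ?_
      · intro τ s2 s3
        constructor
        · rcases s2 with ⟨l, hl, he⟩
          rcases Finset.mem_union.1 (hs2 hl) with h | h
          · exact Or.inl ⟨l, h, he⟩
          · exact Or.inr ⟨l, h, he⟩
        · rcases s3 with ⟨l, hl, he⟩
          rcases Finset.mem_union.1 (hs3 hl) with h | h
          · exact Or.inl ⟨l, h, he⟩
          · exact Or.inr ⟨l, h, he⟩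
      · intro v hv
        obtain ⟨l, hl, hlv⟩ := mem_of_hasVar hv
        rcases Finset.mem_union.1 (hs2 hl) with h | h
        · exact Or.inl (Or.inl (hasVar_of_mem (hB1sub h) hlv))
        · exact Or.inl (Or.inr (hasVar_of_mem (hB2sub h) hlv))
      · intro v hv
        obtain ⟨l, hl, hlv⟩ := mem_of_hasVar hv
        rcases Finset.mem_union.1 (hs3 hl) with h | h
        · exact Or.inl (Or.inl (hasVar_of_mem (hB1sub h) hlv))
        · exact Or.inl (Or.inr (hasVar_of_mem (hB3sub h) hlv))
      · intro v hv2 hv3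
        obtain ⟨l2, hl2, hl2v⟩ := mem_of_hasVar hv2
        obtain ⟨l3, hl3, hl3v⟩ := mem_of_hasVar hv3
        left
        by_cases h2B : l2 ∈ B2
        · by_cases h3B : l3 ∈ B3
          · exact Or.inr (Or.inr ⟨hasVar_of_mem (hB2sub h2B) hl2v,
              hasVar_of_mem (hB3sub h3B) hl3v⟩)
          · have h3B1 : l3 ∈ B1 := (Finset.mem_union.1 (hs3 hl3)).resolve_right h3B
            exact Or.inl ⟨hasVar_of_mem (hB1sub h3B1) hl3v,
              hasVar_of_mem (hB2sub h2B) hl2v⟩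
        · have h2B1 : l2 ∈ B1 := (Finset.mem_union.1 (hs2 hl2)).resolve_right h2B
          by_cases h3B : l3 ∈ B3
          · exact Or.inr (Or.inl ⟨hasVar_of_mem (hB1sub h2B1) hl2v,
              hasVar_of_mem (hB3sub h3B) hl3v⟩)
          · have h3B1 : l3 ∈ B1 := (Finset.mem_union.1 (hs3 hl3)).resolve_right h3B
            have heq : l2 = l3 := same_lit l2 h2B1 l3 h3B1 (hl2v.trans hl3v.symm)
            subst heq
            exact (huniq l2 hl2 hl3 h2B1 h2B h3B).elim
    by_cases hsub : B1 ⊆ B2 ∨ B1 ⊆ B3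
    · -- fresh variable construction
      obtain ⟨y, hy⟩ := Infinite.exists_notMem_finset (vars F)
      have hyB1 : ∀ b : Bool, (y, b) ∉ B1 :=
        fun b hb => hy (mem_vars_of_mem hC1F (hB1sub hb))
      refine engine F hF hunsat hmin x ε C1 C2 C3 B1 B2 B3 hocc h12 h13 h23 hx1 hx2 hx3
        hB1 hB2 hB3 (insert (y, true) B1) (insert (y, false) B1) ?_ ?_ ?_ ?_ ?_ ?_
      · rw [Finset.card_insert_of_notMem (hyB1 true), hB1card]
      · rw [Finset.card_insert_of_notMem (hyB1 false), hB1card]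
      · intro τ s2 s3
        rcases s2 with ⟨l, hl, he⟩
        rcases Finset.mem_insert.1 hl with rfl | hl'
        · rcases s3 with ⟨m, hm, hme⟩
          rcases Finset.mem_insert.1 hm with rfl | hm'
          · simp at he hme; rw [he] at hme; exact absurd hme (by simp)
          · have hB : satClause τ B1 := ⟨m, hm', hme⟩
            exact ⟨Or.inl hB, Or.inl hB⟩
        · have hB : satClause τ B1 := ⟨l, hl', he⟩
          exact ⟨Or.inl hB, Or.inl hB⟩
      · intro v hv
        obtain ⟨l, hl, hlv⟩ := mem_of_hasVar hv
        rcases Finset.mem_insert.1 hl with rfl | hl'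
        · exact Or.inr (hlv ▸ hy)
        · exact Or.inl (Or.inl (hasVar_of_mem (hB1sub hl') hlv))
      · intro v hv
        obtain ⟨l, hl, hlv⟩ := mem_of_hasVar hv
        rcases Finset.mem_insert.1 hl with rfl | hl'
        · exact Or.inr (hlv ▸ hy)
        · exact Or.inl (Or.inl (hasVar_of_mem (hB1sub hl') hlv))
      · intro v hv2 hv3
        obtain ⟨l2, hl2, hl2v⟩ := mem_of_hasVar hv2
        obtain ⟨l3, hl3, hl3v⟩ := mem_of_hasVar hv3
        rcases Finset.mem_insert.1 hl2 with rfl | hl2'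
        · exact Or.inr (hl2v ▸ hy)
        rcases Finset.mem_insert.1 hl3 with rfl | hl3'
        · exact Or.inr (hl3v ▸ hy)
        left
        rcases hsub with hsB | hsB
        · exact Or.inl ⟨hasVar_of_mem (hB1sub hl2') hl2v,
            hasVar_of_mem (hB2sub (hsB hl2')) hl2v⟩
        · exact Or.inr (Or.inl ⟨hasVar_of_mem (hB1sub hl2') hl2v,
            hasVar_of_mem (hB3sub (hsB hl2')) hl2v⟩)
    · push_neg at hsub
      obtain ⟨hns2, hns3⟩ := hsub
      obtain ⟨p, q, hpq, hB1eq⟩ := Finset.card_eq_two.1 hB1card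
      have hpB1 : p ∈ B1 := by rw [hB1eq]; simp
      have hqB1 : q ∈ B1 := by rw [hB1eq]; simp
      have hmemB1 : ∀ l ∈ B1, l = p ∨ l = q := by
        intro l hl; rw [hB1eq] at hl; simpa using hl
      have hcard_union2 : B1 ∩ B2 ≠ ∅ → (B1 ∪ B2).card = 3 := by
        intro hne
        have := inter_card_one hB1card hne hns2
        have := Finset.card_union_add_card_inter B1 B2
        omega
      have hcard_union3 : B1 ∩ B3 ≠ ∅ → (B1 ∪ B3).card = 3 := by
        intro hne
        have := inter_card_one hB1card hne hns3
        have := Finset.card_union_add_card_inter B1 B3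
        omega
      have hnotmem2 : B1 ∩ B2 = ∅ → ∀ l ∈ B1, l ∉ B2 := by
        intro he l hl hl2
        rw [Finset.eq_empty_iff_forall_notMem] at he
        exact he l (Finset.mem_inter.2 ⟨hl, hl2⟩)
      have hnotmem3 : B1 ∩ B3 = ∅ → ∀ l ∈ B1, l ∉ B3 := by
        intro he l hl hl2
        rw [Finset.eq_empty_iff_forall_notMem] at he
        exact he l (Finset.mem_inter.2 ⟨hl, hl2⟩)
      by_cases hi2 : B1 ∩ B2 = ∅ <;> by_cases hi3 : B1 ∩ B3 = ∅
      · -- both empty : E2 = insert p B2, E3 = insert q B3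
        refine keyB (insert p B2) (insert q B3) ?_ ?_ ?_ ?_ ?_
        · rw [Finset.card_insert_of_notMem (hnotmem2 hi2 p hpB1), hB2card]
        · rw [Finset.card_insert_of_notMem (hnotmem3 hi3 q hqB1), hB3card]
        · intro l hl
          rcases Finset.mem_insert.1 hl with rfl | h
          · exact Finset.mem_union_left _ hpB1
          · exact Finset.mem_union_right _ h
        · intro l hl
          rcases Finset.mem_insert.1 hl with rfl | h
          · exact Finset.mem_union_left _ hqB1
          · exact Finset.mem_union_right _ h
        · intro l hl2 hl3 hlB1 hlB2 hlB3
          have e2 : l = p := (Finset.mem_insert.1 hl2).resolve_right hlB2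
          have e3 : l = q := (Finset.mem_insert.1 hl3).resolve_right hlB3
          exact hpq (e2 ▸ e3 ▸ rfl)
      · -- B1∩B2 = ∅, B1∩B3 ≠ ∅ : E2 = insert u2 B2, E3 = B1 ∪ B3
        set u2 : Lit := if q ∈ B3 then q else p with hu2
        have hu2B1 : u2 ∈ B1 := by rw [hu2]; split <;> assumption
        refine keyB (insert u2 B2) (B1 ∪ B3) ?_ (hcard_union3 hi3) ?_ (le_refl _) ?_
        · rw [Finset.card_insert_of_notMem (hnotmem2 hi2 u2 hu2B1), hB2card]
        · intro l hl
          rcases Finset.mem_insert.1 hl with rfl | h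
          · exact Finset.mem_union_left _ hu2B1
          · exact Finset.mem_union_right _ h
        · intro l hl2 hl3 hlB1 hlB2 hlB3
          have e2 : l = u2 := (Finset.mem_insert.1 hl2).resolve_right hlB2
          obtain ⟨w, hw⟩ := Finset.nonempty_iff_ne_empty.2 hi3
          obtain ⟨hwB1, hwB3⟩ := Finset.mem_inter.1 hw
          rw [hu2] at e2
          by_cases hq3 : q ∈ B3
          · rw [if_pos hq3] at e2; exact hlB3 (e2 ▸ hq3)
          · rw [if_neg hq3] at e2
            rcases hmemB1 w hwB1 with rfl | rfl
            · exact hlB3 (e2 ▸ hwB3)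
            · exact hq3 hwB3
      · -- B1∩B2 ≠ ∅, B1∩B3 = ∅ : E2 = B1 ∪ B2, E3 = insert u3 B3
        set u3 : Lit := if p ∈ B2 then p else q with hu3
        have hu3B1 : u3 ∈ B1 := by rw [hu3]; split <;> assumption
        refine keyB (B1 ∪ B2) (insert u3 B3) (hcard_union2 hi2) ?_ (le_refl _) ?_ ?_
        · rw [Finset.card_insert_of_notMem (hnotmem3 hi3 u3 hu3B1), hB3card]
        · intro l hl
          rcases Finset.mem_insert.1 hl with rfl | h
          · exact Finset.mem_union_left _ hu3B1
          · exact Finset.mem_union_right _ h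
        · intro l hl2 hl3 hlB1 hlB2 hlB3
          have e3 : l = u3 := (Finset.mem_insert.1 hl3).resolve_right hlB3
          obtain ⟨w, hw⟩ := Finset.nonempty_iff_ne_empty.2 hi2
          obtain ⟨hwB1, hwB2⟩ := Finset.mem_inter.1 hw
          rw [hu3] at e3
          by_cases hp2 : p ∈ B2
          · rw [if_pos hp2] at e3; exact hlB2 (e3 ▸ hp2)
          · rw [if_neg hp2] at e3
            rcases hmemB1 w hwB1 with rfl | rfl
            · exact hp2 hwB2
            · exact hlB2 (e3 ▸ hwB2)
      · -- both nonempty : E2 = B1 ∪ B2, E3 = B1 ∪ B3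
        refine keyB (B1 ∪ B2) (B1 ∪ B3) (hcard_union2 hi2) (hcard_union3 hi3)
          (le_refl _) (le_refl _) ?_
        intro l hl2 hl3 hlB1 hlB2 hlB3
        obtain ⟨w2, hw2⟩ := Finset.nonempty_iff_ne_empty.2 hi2
        obtain ⟨hw2B1, hw2B2⟩ := Finset.mem_inter.1 hw2
        obtain ⟨w3, hw3⟩ := Finset.nonempty_iff_ne_empty.2 hi3
        obtain ⟨hw3B1, hw3B3⟩ := Finset.mem_inter.1 hw3
        rcases hmemB1 l hlB1 with e | e
        · rcases hmemB1 w2 hw2B1 with e2 | e2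
          · exact hlB2 (by rw [e, ← e2]; exact hw2B2)
          · rcases hmemB1 w3 hw3B1 with e3 | e3
            · exact hlB3 (by rw [e, ← e3]; exact hw3B3)
            · exact hcom ⟨q, hqB1, e2 ▸ hw2B2, e3 ▸ hw3B3⟩
        · rcases hmemB1 w2 hw2B1 with e2 | e2
          · rcases hmemB1 w3 hw3B1 with e3 | e3
            · exact hcom ⟨p, hpB1, e2 ▸ hw2B2, e3 ▸ hw3B3⟩
            · exact hlB3 (by rw [e, ← e3]; exact hw3B3)
          · exact hlB2 (by rw [e, ← e2]; exact hw2B2)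

theorem stmt15 (F : CNF) (hF : KS 3 4 F) (hunsat : ¬ Satisfiable F)
    (hmin : ∀ G : CNF, KS 3 4 G → ¬ Satisfiable G → F.card ≤ G.card)
    (x : ℕ) (hx : vdeg F x = 3) :
    ∃ (ε : Bool) (a b c d : Lit), a.1 ≠ x ∧
      occ F x = {({(x, ε), a, b} : Clause), {(x, !ε), a, c}, {(x, !ε), a, d}} := by
  have hx3 : (occ F x).card = 3 := hx
  obtain ⟨c1, c2, c3, h12, h13, h23, hocc⟩ := Finset.card_eq_three.1 hx3
  have m1 : c1 ∈ occ F x := by rw [hocc]; simp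
  have m2 : c2 ∈ occ F x := by rw [hocc]; simp
  have m3 : c3 ∈ occ F x := by rw [hocc]; simp
  have hv1 : hasVar x c1 := (mem_occ.1 m1).2
  have hv2 : hasVar x c2 := (mem_occ.1 m2).2
  have hv3 : hasVar x c3 := (mem_occ.1 m3).2
  have hperm : ∀ a b c : Clause, occ F x = {a, b, c} → occ F x = {b, a, c} := by
    intro a b c h; rw [h]; ext l; simp; tauto
  have hperm2 : ∀ a b c : Clause, occ F x = {a, b, c} → occ F x = {c, a, b} := by
    intro a b c h; rw [h]; ext l; simp; tauto
  rcases hv1 with h1 | h1 <;> rcases hv2 with h2 | h2 <;> rcases hv3 with h3 | h3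
  · exact (drop_pure F hF hunsat hmin x hx true (by
      intro C hC; rw [hocc] at hC
      rcases Finset.mem_insert.1 hC with rfl | hC'
      · exact h1
      rcases Finset.mem_insert.1 hC' with rfl | hC''
      · exact h2
      · rw [Finset.mem_singleton.1 hC'']; exact h3)).elim
  · -- TTF : ε = false, C1 = c3
    exact core F hF hunsat hmin x c3 c1 c2 false (hperm2 c1 c2 c3 hocc)
      h13.symm h23.symm h12 h3 h1 h2
  · -- TFT : ε = false, C1 = c2
    exact core F hF hunsat hmin x c2 c1 c3 false (hperm c1 c2 c3 hocc)
      h12.symm h23 h13 h2 h1 h3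
  · -- TFF : ε = true, C1 = c1
    exact core F hF hunsat hmin x c1 c2 c3 true hocc h12 h13 h23 h1 h2 h3
  · -- FTT : ε = false, C1 = c1
    exact core F hF hunsat hmin x c1 c2 c3 false hocc h12 h13 h23 h1 h2 h3
  · -- FTF : ε = true, C1 = c2
    exact core F hF hunsat hmin x c2 c1 c3 true (hperm c1 c2 c3 hocc)
      h12.symm h23 h13 h2 h1 h3
  · -- FFT : ε = true, C1 = c3
    exact core F hF hunsat hmin x c3 c1 c2 true (hperm2 c1 c2 c3 hocc)
      h13.symm h23.symm h12 h3 h1 h2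
  · exact (drop_pure F hF hunsat hmin x hx false (by
      intro C hC; rw [hocc] at hC
      rcases Finset.mem_insert.1 hC with rfl | hC'
      · exact h1
      rcases Finset.mem_insert.1 hC' with rfl | hC''
      · exact h2
      · rw [Finset.mem_singleton.1 hC'']; exact h3)).elim
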